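/- Soundness of TDS: for every formula φ of L_TDS, if φ is a theorem of the Hilbert system TDS (i.e., ⊢_TDS φ), then φ is valid on every TDS-model (it holds at every world of every TDS-model). -/

import Mathlib

/-! # Temporal Deontic STIT logic (TDS) — common definitions -/

/-- Formulas of the language L_TDS over a set `Ag` of agents, with propositional
variables indexed by `ℕ`. -/
inductive Formula (Ag : Type) : Type
  | var : ℕ → Formula Ag
  | neg : Formula Ag → Formula Ag
  | and : Formula Ag → Formula Ag → Formula Ag
  | box : Formula Ag → Formula Ag            -- □
  | agent : Ag → Formula Ag → Formula Ag     -- [i]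
  | coal : Formula Ag → Formula Ag           -- [Ag]
  | G : Formula Ag → Formula Ag
  | H : Formula Ag → Formula Ag
  | obl : Ag → Formula Ag → Formula Ag       -- ⊗_i

namespace Formula

variable {Ag : Type}

def impl (φ ψ : Formula Ag) : Formula Ag := neg (and φ (neg ψ))
def orf (φ ψ : Formula Ag) : Formula Ag := neg (and (neg φ) (neg ψ))
def diam (φ : Formula Ag) : Formula Ag := neg (box (neg φ))              -- ◇
def diamAg (i : Ag) (φ : Formula Ag) : Formula Ag := neg (agent i (neg φ)) -- ⟨i⟩
def diamCoal (φ : Formula Ag) : Formula Ag := neg (coal (neg φ))         -- ⟨Ag⟩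
def F (φ : Formula Ag) : Formula Ag := neg (G (neg φ))
def P (φ : Formula Ag) : Formula Ag := neg (H (neg φ))
def perm (i : Ag) (φ : Formula Ag) : Formula Ag := neg (obl i (neg φ))   -- ⊖_i
def bot : Formula Ag := and (var 0) (neg (var 0))
def verum : Formula Ag := neg bot

/-- name(p) := □¬p ∧ □(Gp ∧ Hp) -/
def nameF (p : ℕ) : Formula Ag :=
  and (box (neg (var p))) (box (and (G (var p)) (H (var p))))

/-- The propositional variable `p` occurs in the formula. -/
def occurs (p : ℕ) : Formula Ag → Prop
  | var q => p = q
  | neg φ => occurs p φ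
  | and φ ψ => occurs p φ ∨ occurs p ψ
  | box φ => occurs p φ
  | agent _ φ => occurs p φ
  | coal φ => occurs p φ
  | G φ => occurs p φ
  | H φ => occurs p φ
  | obl _ φ => occurs p φ

/-- Propositional (Boolean) evaluation of a formula, treating every formula whose
main connective is not `neg` or `and` as an atom valued by `v`. -/
def evalProp (v : Formula Ag → Bool) : Formula Ag → Bool
  | neg φ => ! evalProp v φ
  | and φ ψ => evalProp v φ && evalProp v ψ
  | φ => v φ

/-- φ is a propositional tautology. -/
def Tautology (φ : Formula Ag) : Prop := ∀ v : Formula Ag → Bool, evalProp v φ = true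

/-- Finite conjunction. -/
def bigAnd (l : List (Formula Ag)) : Formula Ag := l.foldr and verum

end Formula

/-- A fixed enumeration of the (finitely many) agents. -/
noncomputable def agList (Ag : Type) [Fintype Ag] : List Ag := Finset.univ.toList

open Formula in
/-- The Hilbert system TDS. -/
inductive Prv {Ag : Type} [Fintype Ag] : Formula Ag → Prop
  | taut {φ : Formula Ag} : Tautology φ → Prv φ
  -- S5 for □
  | kBox (φ ψ : Formula Ag) : Prv (impl (box (impl φ ψ)) (impl (box φ) (box ψ)))
  | tBox (φ : Formula Ag) : Prv (impl (box φ) φ)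
  | fiveBox (φ : Formula Ag) : Prv (impl (diam φ) (box (diam φ)))
  -- S5 for each [i]
  | kAg (i : Ag) (φ ψ : Formula Ag) :
      Prv (impl (agent i (impl φ ψ)) (impl (agent i φ) (agent i ψ)))
  | tAg (i : Ag) (φ : Formula Ag) : Prv (impl (agent i φ) φ)
  | fiveAg (i : Ag) (φ : Formula Ag) : Prv (impl (diamAg i φ) (agent i (diamAg i φ)))
  -- S5 for [Ag]
  | kCoal (φ ψ : Formula Ag) : Prv (impl (coal (impl φ ψ)) (impl (coal φ) (coal ψ)))
  | tCoal (φ : Formula Ag) : Prv (impl (coal φ) φ)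
  | fiveCoal (φ : Formula Ag) : Prv (impl (diamCoal φ) (coal (diamCoal φ)))
  -- A10 independence of agents
  | a10 (φs : Ag → Formula Ag) :
      Prv (impl (bigAnd ((agList Ag).map (fun i => diam (agent i (φs i)))))
                (diam (bigAnd ((agList Ag).map (fun i => agent i (φs i))))))
  -- A11
  | a11 (φs : Ag → Formula Ag) :
      Prv (impl (bigAnd ((agList Ag).map (fun i => agent i (φs i))))
                (coal (bigAnd ((agList Ag).map (fun i => φs i)))))
  -- A12 K for ⊗_i
  | a12 (i : Ag) (φ ψ : Formula Ag) :
      Prv (impl (obl i (impl φ ψ)) (impl (obl i φ) (obl i ψ)))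
  -- A13
  | a13 (i : Ag) (φ : Formula Ag) : Prv (impl (box φ) (and (agent i φ) (obl i φ)))
  -- A14
  | a14 (i : Ag) (φ : Formula Ag) : Prv (impl (obl i φ) (diam (agent i φ)))
  -- A15
  | a15 (i : Ag) (φ : Formula Ag) : Prv (impl (diam (obl i φ)) (box (obl i φ)))
  -- A16
  | a16 (i : Ag) (φ ψ : Formula Ag) :
      Prv (impl (box (impl (agent i φ) (agent i ψ))) (impl (obl i φ) (obl i ψ)))
  -- KD4 for G
  | kG (φ ψ : Formula Ag) : Prv (impl (G (impl φ ψ)) (impl (G φ) (G ψ)))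
  | fourG (φ : Formula Ag) : Prv (impl (G φ) (G (G φ)))
  | dG (φ : Formula Ag) : Prv (impl (G φ) (F φ))
  -- K for H
  | kH (φ ψ : Formula Ag) : Prv (impl (H (impl φ ψ)) (impl (H φ) (H ψ)))
  -- A21 - A25
  | a21 (φ : Formula Ag) : Prv (impl φ (G (P φ)))
  | a22 (φ : Formula Ag) : Prv (impl φ (H (F φ)))
  | a23 (φ : Formula Ag) : Prv (impl (F (P φ)) (orf (P φ) (orf φ (F φ))))
  | a24 (φ : Formula Ag) : Prv (impl (P (F φ)) (orf (P φ) (orf φ (F φ))))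
  | a25 (φ : Formula Ag) : Prv (impl (F (diam φ)) (diamCoal (F φ)))
  -- rules
  | mp {φ ψ : Formula Ag} : Prv (impl φ ψ) → Prv φ → Prv ψ
  | necBox {φ : Formula Ag} : Prv φ → Prv (box φ)
  | necG {φ : Formula Ag} : Prv φ → Prv (G φ)
  | necH {φ : Formula Ag} : Prv φ → Prv (H φ)
  | r2 {φ : Formula Ag} (p : ℕ) : ¬ occurs p φ → Prv (impl (nameF p) φ) → Prv φ

/-- Derivability from a set of premises (Def. 4.4 of Blackburn–de Rijke–Venema). -/
def SetProv {Ag : Type} [Fintype Ag] (Γ : Set (Formula Ag)) (φ : Formula Ag) : Prop :=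
  ∃ l : List (Formula Ag), (∀ ψ ∈ l, ψ ∈ Γ) ∧ Prv (l.foldr Formula.impl φ)

/-- Maximally consistent set. -/
def MCS {Ag : Type} [Fintype Ag] (Γ : Set (Formula Ag)) : Prop :=
  ¬ SetProv Γ Formula.bot ∧ ∀ Γ' : Set (Formula Ag), Γ ⊂ Γ' → SetProv Γ' Formula.bot

/-- The members of `Boxes`. -/
inductive BoxOp (Ag : Type) : Type
  | box : BoxOp Ag
  | coal : BoxOp Ag
  | G : BoxOp Ag
  | H : BoxOp Ag
  | agent : Ag → BoxOp Ag
  | obl : Ag → BoxOp Ag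

/-- Applying a box operator to a formula. -/
def BoxOp.apply {Ag : Type} : BoxOp Ag → Formula Ag → Formula Ag
  | .box, φ => .box φ
  | .coal, φ => .coal φ
  | .G, φ => .G φ
  | .H, φ => .H φ
  | .agent i, φ => .agent i φ
  | .obl i, φ => .obl i φ

/-- The dual diamond ⟨α⟩ of a box operator [α]. -/
def BoxOp.dual {Ag : Type} (α : BoxOp Ag) (φ : Formula Ag) : Formula Ag :=
  .neg (α.apply (.neg φ))

/-- Canonical relation: R^dt_[α] Γ Δ iff {φ : [α]φ ∈ Γ} ⊆ Δ. -/
def canR {Ag : Type} (α : BoxOp Ag) (Γ Δ : Set (Formula Ag)) : Prop :=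
  ∀ φ : Formula Ag, α.apply φ ∈ Γ → φ ∈ Δ

/-- Zig-zagging formula ⟨α₁⟩(φ₁ ∧ ⟨α₂⟩(φ₂ ∧ … ∧ ⟨αₙ⟩φₙ)…), where `l` lists the
outer pairs (αₖ, φₖ) for k < n and `(α, φ)` is the innermost pair (αₙ, φₙ). -/
def zigzag {Ag : Type} (l : List (BoxOp Ag × Formula Ag)) (α : BoxOp Ag)
    (φ : Formula Ag) : Formula Ag :=
  l.foldr (fun p acc => p.1.dual (Formula.and p.2 acc)) (α.dual φ)

/-- IRR-theories. -/
def IRRTheory {Ag : Type} [Fintype Ag] (Γ : Set (Formula Ag)) : Prop :=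
  MCS Γ ∧ (∃ p : ℕ, Formula.nameF p ∈ Γ) ∧
    ∀ (l : List (BoxOp Ag × Formula Ag)) (α : BoxOp Ag) (φ : Formula Ag),
      zigzag l α φ ∈ Γ → ∃ q : ℕ, zigzag l α (Formula.and φ (Formula.nameF q)) ∈ Γ

/-- Diamond saturated set of MCSs. -/
def DiamondSaturated {Ag : Type} (X : Set (Set (Formula Ag))) : Prop :=
  ∀ Γ ∈ X, ∀ (α : BoxOp Ag) (φ : Formula Ag), α.dual φ ∈ Γ →
    ∃ Δ ∈ X, canR α Γ Δ ∧ φ ∈ Δ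

/-- The relational frame conditions of a TDS-frame. -/
structure IsTDSFrame (Ag W : Type) (Rbox : W → W → Prop) (Rag : Ag → W → W → Prop)
    (Rcoal : W → W → Prop) (RG : W → W → Prop) (RH : W → W → Prop)
    (Robl : Ag → W → W → Prop) : Prop where
  nonempty : Nonempty W
  box_equiv : Equivalence Rbox
  ag_equiv : ∀ i : Ag, Equivalence (Rag i)
  coal_equiv : Equivalence Rcoal
  c1 : ∀ (i : Ag) (w v : W), Rag i w v → Rbox w v
  c2 : ∀ u : Ag → W, (∀ i j : Ag, Rbox (u i) (u j)) → ∃ v : W, ∀ i : Ag, Rag i (u i) v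
  c3 : ∀ w v : W, Rcoal w v → ∀ i : Ag, Rag i w v
  g_trans : ∀ w u v : W, RG w u → RG u v → RG w v
  g_serial : ∀ w : W, ∃ v : W, RG w v
  h_conv : ∀ w v : W, RH w v ↔ RG v w
  t4 : ∀ w u v : W, RG w u → RG w v → RG u v ∨ u = v ∨ RG v u
  t5 : ∀ w u v : W, RH w u → RH w v → RH u v ∨ u = v ∨ RH v u
  t6 : ∀ w u v : W, RG w u → Rbox u v → ∃ z : W, Rcoal w z ∧ RG z v
  t7 : ∀ w u : W, Rbox w u → ¬ RG w u
  d8 : ∀ (i : Ag) (w v : W), Robl i w v → Rbox w v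
  d9 : ∀ (i : Ag) (w : W), ∃ v : W, Rbox w v ∧ ∀ u : W, Rag i v u → Robl i w u
  d10 : ∀ (i : Ag) (w v u z : W), Rbox w v → Rbox w u → Robl i u z → Robl i v z
  d11 : ∀ (i : Ag) (w v : W), Robl i w v →
      ∃ u : W, Rbox w u ∧ Rag i u v ∧ ∀ z : W, Rag i u z → Robl i w z

/-- The relational frame conditions of a TUS-frame (the non-deontic part of a
TDS-frame). -/
structure IsTUSFrame (Ag W : Type) (Rbox : W → W → Prop) (Rag : Ag → W → W → Prop)
    (Rcoal : W → W → Prop) (RG : W → W → Prop) (RH : W → W → Prop) : Prop where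
  nonempty : Nonempty W
  box_equiv : Equivalence Rbox
  ag_equiv : ∀ i : Ag, Equivalence (Rag i)
  coal_equiv : Equivalence Rcoal
  c1 : ∀ (i : Ag) (w v : W), Rag i w v → Rbox w v
  c2 : ∀ u : Ag → W, (∀ i j : Ag, Rbox (u i) (u j)) → ∃ v : W, ∀ i : Ag, Rag i (u i) v
  c3 : ∀ w v : W, Rcoal w v → ∀ i : Ag, Rag i w v
  g_trans : ∀ w u v : W, RG w u → RG u v → RG w v
  g_serial : ∀ w : W, ∃ v : W, RG w v
  h_conv : ∀ w v : W, RH w v ↔ RG v w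
  t4 : ∀ w u v : W, RG w u → RG w v → RG u v ∨ u = v ∨ RG v u
  t5 : ∀ w u v : W, RH w u → RH w v → RH u v ∨ u = v ∨ RH v u
  t6 : ∀ w u v : W, RG w u → Rbox u v → ∃ z : W, Rcoal w z ∧ RG z v
  t7 : ∀ w u : W, Rbox w u → ¬ RG w u

/-- A (bare) relational Kripke model for the language L_TDS. -/
structure KModel (Ag : Type) where
  W : Type
  Rbox : W → W → Prop
  Rag : Ag → W → W → Prop
  Rcoal : W → W → Prop
  RG : W → W → Prop
  RH : W → W → Prop
  Robl : Ag → W → W → Prop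
  val : ℕ → W → Prop

/-- Standard Kripke satisfaction. -/
def KModel.sat {Ag : Type} (M : KModel Ag) : Formula Ag → M.W → Prop
  | .var p, w => M.val p w
  | .neg φ, w => ¬ M.sat φ w
  | .and φ ψ, w => M.sat φ w ∧ M.sat ψ w
  | .box φ, w => ∀ u : M.W, M.Rbox w u → M.sat φ u
  | .agent i φ, w => ∀ u : M.W, M.Rag i w u → M.sat φ u
  | .coal φ, w => ∀ u : M.W, M.Rcoal w u → M.sat φ u
  | .G φ, w => ∀ u : M.W, M.RG w u → M.sat φ u
  | .H φ, w => ∀ u : M.W, M.RH w u → M.sat φ u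
  | .obl i φ, w => ∀ u : M.W, M.Robl i w u → M.sat φ u

/-- A TDS-model: a Kripke model whose frame is a TDS-frame. -/
structure TDSModel (Ag : Type) extends KModel Ag where
  frame : IsTDSFrame Ag W Rbox Rag Rcoal RG RH Robl

/-- Satisfaction on TDS-models. -/
abbrev TDSModel.sat {Ag : Type} (M : TDSModel Ag) : Formula Ag → M.W → Prop :=
  M.toKModel.sat

/-- The canonical model with domain restricted to a set `X` of theories. -/
def canonicalModel (Ag : Type) (X : Set (Set (Formula Ag))) : KModel Ag where
  W := X
  Rbox Γ Δ := canR BoxOp.box Γ.1 Δ.1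
  Rag i Γ Δ := canR (BoxOp.agent i) Γ.1 Δ.1
  Rcoal Γ Δ := canR BoxOp.coal Γ.1 Δ.1
  RG Γ Δ := canR BoxOp.G Γ.1 Δ.1
  RH Γ Δ := canR BoxOp.H Γ.1 Δ.1
  Robl i Γ Δ := canR (BoxOp.obl i) Γ.1 Δ.1
  val p Γ := Formula.var p ∈ Γ.1

/-- A temporal utilitarian STIT model (TUS-model). -/
structure TUSModel (Ag : Type) where
  W : Type
  Rbox : W → W → Prop
  Rag : Ag → W → W → Prop
  Rcoal : W → W → Prop
  RG : W → W → Prop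
  RH : W → W → Prop
  util : W → ℕ
  val : ℕ → W → Prop
  frame : IsTUSFrame Ag W Rbox Rag Rcoal RG RH

namespace TUSModel

variable {Ag : Type}

/-- The moment R_□(w). -/
def mom (M : TUSModel Ag) (w : M.W) : Set M.W := {u | M.Rbox w u}

/-- The choice cell R_[i](v). -/
def cell (M : TUSModel Ag) (i : Ag) (v : M.W) : Set M.W := {u | M.Rag i v u}

/-- The state R^s_[i](v) := ⋂_{k ≠ i} R_[k](v). -/
def state (M : TUSModel Ag) (i : Ag) (v : M.W) : Set M.W :=
  {u | ∀ k : Ag, k ≠ i → M.Rag k v u}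

/-- Weak preference ≤ between sets of worlds. -/
def pref (M : TUSModel Ag) (A B : Set M.W) : Prop :=
  ∀ a ∈ A, ∀ b ∈ B, M.util a ≤ M.util b

/-- Weak dominance ⪯ between sets of worlds, relative to the moment of `w`:
for every state included in the moment R_□(w), the restriction of `A` is weakly
preferred to the restriction of `B`. -/
def dom (M : TUSModel Ag) (i : Ag) (w : M.W) (A B : Set M.W) : Prop :=
  ∀ x : M.W, M.state i x ⊆ M.mom w → M.pref (A ∩ M.state i x) (B ∩ M.state i x)

/-- Strict dominance ≺. -/
def sdom (M : TUSModel Ag) (i : Ag) (w : M.W) (A B : Set M.W) : Prop :=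
  M.dom i w A B ∧ ¬ M.dom i w B A

/-- Satisfaction on TUS-models, with the dominance-based clause for ⊗_i. -/
def sat (M : TUSModel Ag) : Formula Ag → M.W → Prop
  | .var p, w => M.val p w
  | .neg φ, w => ¬ M.sat φ w
  | .and φ ψ, w => M.sat φ w ∧ M.sat ψ w
  | .box φ, w => ∀ u : M.W, M.Rbox w u → M.sat φ u
  | .agent i φ, w => ∀ u : M.W, M.Rag i w u → M.sat φ u
  | .coal φ, w => ∀ u : M.W, M.Rcoal w u → M.sat φ u
  | .G φ, w => ∀ u : M.W, M.RG w u → M.sat φ u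
  | .H φ, w => ∀ u : M.W, M.RH w u → M.sat φ u
  | .obl i φ, w =>
      ∀ v : M.W, M.cell i v ⊆ M.mom w → ¬ (M.cell i v ⊆ {u : M.W | M.sat φ u}) →
        ∃ z : M.W, M.cell i z ⊆ M.mom w ∧
          M.sdom i w (M.cell i v) (M.cell i z) ∧
          M.cell i z ⊆ {u : M.W | M.sat φ u} ∧
          ∀ x : M.W, M.cell i x ⊆ M.mom w →
            M.dom i w (M.cell i z) (M.cell i x) → M.cell i x ⊆ {u : M.W | M.sat φ u}

end TUSModel

/-- Replacing the deontic relations of a TDS-model by a utility function yields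
a TUS-model over the same worlds, relations and valuation. -/
def TDSModel.toTUS {Ag : Type} (M : TDSModel Ag) (util : M.W → ℕ) : TUSModel Ag where
  W := M.W
  Rbox := M.Rbox
  Rag := M.Rag
  Rcoal := M.Rcoal
  RG := M.RG
  RH := M.RH
  util := util
  val := M.val
  frame :=
    { nonempty := M.frame.nonempty
      box_equiv := M.frame.box_equiv
      ag_equiv := M.frame.ag_equiv
      coal_equiv := M.frame.coal_equiv
      c1 := M.frame.c1
      c2 := M.frame.c2
      c3 := M.frame.c3
      g_trans := M.frame.g_trans
      g_serial := M.frame.g_serial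
      h_conv := M.frame.h_conv
      t4 := M.frame.t4
      t5 := M.frame.t5
      t6 := M.frame.t6
      t7 := M.frame.t7 }

section Soundness

open Formula

variable {Ag : Type}

namespace KModel

lemma sat_neg (M : KModel Ag) (φ : Formula Ag) (w : M.W) :
    M.sat (.neg φ) w ↔ ¬ M.sat φ w := Iff.rfl

lemma sat_and (M : KModel Ag) (φ ψ : Formula Ag) (w : M.W) :
    M.sat (.and φ ψ) w ↔ M.sat φ w ∧ M.sat ψ w := Iff.rfl

lemma sat_impl (M : KModel Ag) (φ ψ : Formula Ag) (w : M.W) :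
    M.sat (φ.impl ψ) w ↔ (M.sat φ w → M.sat ψ w) := by
  simp only [Formula.impl, sat_neg, sat_and]; tauto

lemma sat_orf (M : KModel Ag) (φ ψ : Formula Ag) (w : M.W) :
    M.sat (φ.orf ψ) w ↔ (M.sat φ w ∨ M.sat ψ w) := by
  simp only [Formula.orf, sat_neg, sat_and]; tauto

lemma sat_diam (M : KModel Ag) (φ : Formula Ag) (w : M.W) :
    M.sat (φ.diam) w ↔ ∃ u, M.Rbox w u ∧ M.sat φ u := by
  simp only [Formula.diam, sat_neg, KModel.sat]
  push_neg
  simp only [not_not]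

lemma sat_diamAg (M : KModel Ag) (i : Ag) (φ : Formula Ag) (w : M.W) :
    M.sat (Formula.diamAg i φ) w ↔ ∃ u, M.Rag i w u ∧ M.sat φ u := by
  simp only [Formula.diamAg, sat_neg, KModel.sat]
  push_neg
  simp only [not_not]

lemma sat_diamCoal (M : KModel Ag) (φ : Formula Ag) (w : M.W) :
    M.sat (Formula.diamCoal φ) w ↔ ∃ u, M.Rcoal w u ∧ M.sat φ u := by
  simp only [Formula.diamCoal, sat_neg, KModel.sat]
  push_neg
  simp only [not_not]

lemma sat_F (M : KModel Ag) (φ : Formula Ag) (w : M.W) :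
    M.sat (φ.F) w ↔ ∃ u, M.RG w u ∧ M.sat φ u := by
  simp only [Formula.F, sat_neg, KModel.sat]
  push_neg
  simp only [not_not]

lemma sat_P (M : KModel Ag) (φ : Formula Ag) (w : M.W) :
    M.sat (φ.P) w ↔ ∃ u, M.RH w u ∧ M.sat φ u := by
  simp only [Formula.P, sat_neg, KModel.sat]
  push_neg
  simp only [not_not]

lemma sat_verum (M : KModel Ag) (w : M.W) : M.sat Formula.verum w := by
  simp only [Formula.verum, Formula.bot, sat_neg, sat_and]
  tauto

lemma sat_bigAnd (M : KModel Ag) (l : List (Formula Ag)) (w : M.W) :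
    M.sat (Formula.bigAnd l) w ↔ ∀ ψ ∈ l, M.sat ψ w := by
  induction l with
  | nil => simp [Formula.bigAnd, sat_verum]
  | cons a t ih =>
      simp only [Formula.bigAnd, List.foldr_cons, sat_and] at *
      simp [ih]

lemma eval_iff (M : KModel Ag) (w : M.W) (φ : Formula Ag) :
    Formula.evalProp (fun ψ => decide (M.sat ψ w) (h := Classical.propDecidable _)) φ
      = true ↔ M.sat φ w := by
  induction φ with
  | neg φ ih =>
      simp only [Formula.evalProp, Bool.not_eq_true', ← Bool.not_eq_true, ih, sat_neg]
  | and φ ψ ih1 ih2 =>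
      simp only [Formula.evalProp, Bool.and_eq_true, ih1, ih2, sat_and]
  | _ =>
      simp only [Formula.evalProp]
      exact @decide_eq_true_iff _ (Classical.propDecidable _)

lemma taut_sat {φ : Formula Ag} (h : Formula.Tautology φ) (M : KModel Ag) (w : M.W) :
    M.sat φ w :=
  (eval_iff M w φ).mp (h _)

/-- Satisfaction only depends on the valuation of occurring variables. -/
lemma sat_update (M : KModel Ag) (p : ℕ) (v' : M.W → Prop) :
    ∀ (φ : Formula Ag), ¬ φ.occurs p → ∀ w : M.W,
    (({ M with val := fun q => if q = p then v' else M.val q } : KModel Ag).sat φ w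
      ↔ M.sat φ w) := by
  intro φ
  induction φ with
  | var q =>
      intro h w
      simp only [Formula.occurs] at h
      simp only [KModel.sat]
      rw [if_neg (fun hq => h hq.symm)]
  | neg φ ih =>
      intro h w
      simp only [Formula.occurs] at h
      simp only [KModel.sat, ih h]
  | and φ ψ ih1 ih2 =>
      intro h w
      simp only [Formula.occurs] at h
      push_neg at h
      simp only [KModel.sat, ih1 h.1, ih2 h.2]
  | box φ ih =>
      intro h w
      simp only [Formula.occurs] at h
      simp only [KModel.sat]
      exact forall_congr' fun u => imp_congr Iff.rfl (ih h u)
  | agent i φ ih =>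
      intro h w
      simp only [Formula.occurs] at h
      simp only [KModel.sat]
      exact forall_congr' fun u => imp_congr Iff.rfl (ih h u)
  | coal φ ih =>
      intro h w
      simp only [Formula.occurs] at h
      simp only [KModel.sat]
      exact forall_congr' fun u => imp_congr Iff.rfl (ih h u)
  | G φ ih =>
      intro h w
      simp only [Formula.occurs] at h
      simp only [KModel.sat]
      exact forall_congr' fun u => imp_congr Iff.rfl (ih h u)
  | H φ ih =>
      intro h w
      simp only [Formula.occurs] at h
      simp only [KModel.sat]
      exact forall_congr' fun u => imp_congr Iff.rfl (ih h u)
  | obl i φ ih =>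
      intro h w
      simp only [Formula.occurs] at h
      simp only [KModel.sat]
      exact forall_congr' fun u => imp_congr Iff.rfl (ih h u)

end KModel

namespace TDSModel

lemma sat_impl (M : TDSModel Ag) (φ ψ : Formula Ag) (w : M.W) :
    M.sat (φ.impl ψ) w ↔ (M.sat φ w → M.sat ψ w) := KModel.sat_impl _ _ _ _

lemma sat_orf (M : TDSModel Ag) (φ ψ : Formula Ag) (w : M.W) :
    M.sat (φ.orf ψ) w ↔ (M.sat φ w ∨ M.sat ψ w) := KModel.sat_orf _ _ _ _

lemma sat_diam (M : TDSModel Ag) (φ : Formula Ag) (w : M.W) :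
    M.sat (φ.diam) w ↔ ∃ u, M.Rbox w u ∧ M.sat φ u := KModel.sat_diam _ _ _

lemma sat_diamAg (M : TDSModel Ag) (i : Ag) (φ : Formula Ag) (w : M.W) :
    M.sat (Formula.diamAg i φ) w ↔ ∃ u, M.Rag i w u ∧ M.sat φ u := KModel.sat_diamAg _ _ _ _

lemma sat_diamCoal (M : TDSModel Ag) (φ : Formula Ag) (w : M.W) :
    M.sat (Formula.diamCoal φ) w ↔ ∃ u, M.Rcoal w u ∧ M.sat φ u := KModel.sat_diamCoal _ _ _

lemma sat_F (M : TDSModel Ag) (φ : Formula Ag) (w : M.W) :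
    M.sat (φ.F) w ↔ ∃ u, M.RG w u ∧ M.sat φ u := KModel.sat_F _ _ _

lemma sat_P (M : TDSModel Ag) (φ : Formula Ag) (w : M.W) :
    M.sat (φ.P) w ↔ ∃ u, M.RH w u ∧ M.sat φ u := KModel.sat_P _ _ _

lemma sat_bigAnd (M : TDSModel Ag) (l : List (Formula Ag)) (w : M.W) :
    M.sat (Formula.bigAnd l) w ↔ ∀ ψ ∈ l, M.sat ψ w := KModel.sat_bigAnd _ _ _

end TDSModel

end Soundness

/-- **Soundness of TDS**: every theorem of the Hilbert system TDS is valid on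
every TDS-model. -/
theorem tds_soundness {Ag : Type} [Fintype Ag] [Nonempty Ag]
    (φ : Formula Ag) (h : Prv φ) :
    ∀ (M : TDSModel Ag) (w : M.W), M.sat φ w := by
  induction h with
  | taut h => intro M w; exact KModel.taut_sat h _ w
  | kBox φ ψ =>
      intro M w
      rw [TDSModel.sat_impl, TDSModel.sat_impl]
      intro h1 h2 u hu
      exact (TDSModel.sat_impl _ _ _ _).mp (h1 u hu) (h2 u hu)
  | tBox φ =>
      intro M w
      rw [TDSModel.sat_impl]
      exact fun h1 => h1 w (M.frame.box_equiv.refl w)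
  | fiveBox φ =>
      intro M w
      simp only [TDSModel.sat_impl, TDSModel.sat_diam]
      rintro ⟨u, hu, hs⟩ v hv
      exact (KModel.sat_diam _ _ _).mpr ⟨u, M.frame.box_equiv.trans (M.frame.box_equiv.symm hv) hu, hs⟩
  | kAg i φ ψ =>
      intro M w
      rw [TDSModel.sat_impl, TDSModel.sat_impl]
      intro h1 h2 u hu
      exact (TDSModel.sat_impl _ _ _ _).mp (h1 u hu) (h2 u hu)
  | tAg i φ =>
      intro M w
      rw [TDSModel.sat_impl]
      exact fun h1 => h1 w ((M.frame.ag_equiv i).refl w)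
  | fiveAg i φ =>
      intro M w
      simp only [TDSModel.sat_impl, TDSModel.sat_diamAg]
      rintro ⟨u, hu, hs⟩ v hv
      exact (KModel.sat_diamAg _ _ _ _).mpr ⟨u, (M.frame.ag_equiv i).trans ((M.frame.ag_equiv i).symm hv) hu, hs⟩
  | kCoal φ ψ =>
      intro M w
      rw [TDSModel.sat_impl, TDSModel.sat_impl]
      intro h1 h2 u hu
      exact (TDSModel.sat_impl _ _ _ _).mp (h1 u hu) (h2 u hu)
  | tCoal φ =>
      intro M w
      rw [TDSModel.sat_impl]
      exact fun h1 => h1 w (M.frame.coal_equiv.refl w)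
  | fiveCoal φ =>
      intro M w
      simp only [TDSModel.sat_impl, TDSModel.sat_diamCoal]
      rintro ⟨u, hu, hs⟩ v hv
      exact (KModel.sat_diamCoal _ _ _).mpr ⟨u, M.frame.coal_equiv.trans (M.frame.coal_equiv.symm hv) hu, hs⟩
  | a10 φs =>
      intro M w
      rw [TDSModel.sat_impl, TDSModel.sat_bigAnd]
      intro h1
      have h2 : ∀ i : Ag, ∃ u, M.Rbox w u ∧ ∀ z, M.Rag i u z → M.sat (φs i) z := by
        intro i
        have hmem : Formula.diam (Formula.agent i (φs i)) ∈
            (agList Ag).map (fun i => Formula.diam (Formula.agent i (φs i))) :=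
          List.mem_map_of_mem (by simp [agList])
        have := h1 _ hmem
        rw [TDSModel.sat_diam] at this
        obtain ⟨u, hu, hsat⟩ := this
        exact ⟨u, hu, hsat⟩
      choose u hu hs using h2
      have hbb : ∀ i j : Ag, M.Rbox (u i) (u j) :=
        fun i j => M.frame.box_equiv.trans (M.frame.box_equiv.symm (hu i)) (hu j)
      obtain ⟨v, hv⟩ := M.frame.c2 u hbb
      rw [TDSModel.sat_diam]
      refine ⟨v, ?_, ?_⟩
      · have i := Classical.arbitrary Ag
        exact M.frame.box_equiv.trans (hu i) (M.frame.c1 i _ _ (hv i))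
      · rw [TDSModel.sat_bigAnd]
        intro ψ hψ
        rw [List.mem_map] at hψ
        obtain ⟨i, -, rfl⟩ := hψ
        intro z hz
        exact hs i z ((M.frame.ag_equiv i).trans (hv i) hz)
  | a11 φs =>
      intro M w
      rw [TDSModel.sat_impl, TDSModel.sat_bigAnd]
      intro h1 z hz
      refine (KModel.sat_bigAnd _ _ _).mpr ?_
      intro ψ hψ
      rw [List.mem_map] at hψ
      obtain ⟨i, -, rfl⟩ := hψ
      exact h1 _ (List.mem_map_of_mem (by simp [agList])) z (M.frame.c3 w z hz i)
  | a12 i φ ψ =>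
      intro M w
      rw [TDSModel.sat_impl, TDSModel.sat_impl]
      intro h1 h2 u hu
      exact (TDSModel.sat_impl _ _ _ _).mp (h1 u hu) (h2 u hu)
  | a13 i φ =>
      intro M w
      rw [TDSModel.sat_impl]
      intro h1
      exact ⟨fun u hu => h1 u (M.frame.c1 i w u hu),
             fun u hu => h1 u (M.frame.d8 i w u hu)⟩
  | a14 i φ =>
      intro M w
      rw [TDSModel.sat_impl]
      intro h1
      rw [TDSModel.sat_diam]
      obtain ⟨v, hv, hcell⟩ := M.frame.d9 i w
      exact ⟨v, hv, fun u hu => h1 u (hcell u hu)⟩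
  | a15 i φ =>
      intro M w
      rw [TDSModel.sat_impl, TDSModel.sat_diam]
      rintro ⟨u, hu, hs⟩ v hv z hz
      exact hs z (M.frame.d10 i w u v z hu hv hz)
  | a16 i φ ψ =>
      intro M w
      simp only [TDSModel.sat_impl]
      intro h1 h2 v hv
      obtain ⟨u, hwu, huv, hos⟩ := M.frame.d11 i w v hv
      have hφ : M.sat (Formula.agent i φ) u := fun z hz => h2 z (hos z hz)
      exact (TDSModel.sat_impl _ _ _ _).mp (h1 u hwu) hφ v huv
  | kG φ ψ =>
      intro M w
      rw [TDSModel.sat_impl, TDSModel.sat_impl]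
      intro h1 h2 u hu
      exact (TDSModel.sat_impl _ _ _ _).mp (h1 u hu) (h2 u hu)
  | fourG φ =>
      intro M w
      rw [TDSModel.sat_impl]
      intro h1 u hu v hv
      exact h1 v (M.frame.g_trans w u v hu hv)
  | dG φ =>
      intro M w
      rw [TDSModel.sat_impl]
      intro h1
      rw [TDSModel.sat_F]
      obtain ⟨v, hv⟩ := M.frame.g_serial w
      exact ⟨v, hv, h1 v hv⟩
  | kH φ ψ =>
      intro M w
      rw [TDSModel.sat_impl, TDSModel.sat_impl]
      intro h1 h2 u hu
      exact (TDSModel.sat_impl _ _ _ _).mp (h1 u hu) (h2 u hu)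
  | a21 φ =>
      intro M w
      rw [TDSModel.sat_impl]
      intro h1 u hu
      exact (KModel.sat_P _ _ _).mpr ⟨w, (M.frame.h_conv u w).mpr hu, h1⟩
  | a22 φ =>
      intro M w
      rw [TDSModel.sat_impl]
      intro h1 u hu
      exact (KModel.sat_F _ _ _).mpr ⟨w, (M.frame.h_conv w u).mp hu, h1⟩
  | a23 φ =>
      intro M w
      rw [TDSModel.sat_impl, TDSModel.sat_F, TDSModel.sat_orf, TDSModel.sat_orf]
      rintro ⟨u, hwu, hP⟩
      rw [TDSModel.sat_P] at hP
      obtain ⟨v, huv, hφv⟩ := hP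
      have huw : M.RH u w := (M.frame.h_conv u w).mpr hwu
      rcases M.frame.t5 u w v huw huv with h | h | h
      · left; rw [TDSModel.sat_P]; exact ⟨v, h, hφv⟩
      · right; left; rw [← h] at hφv; exact hφv
      · right; right; rw [TDSModel.sat_F]
        exact ⟨v, (M.frame.h_conv v w).mp h, hφv⟩
  | a24 φ =>
      intro M w
      rw [TDSModel.sat_impl, TDSModel.sat_P, TDSModel.sat_orf, TDSModel.sat_orf]
      rintro ⟨u, hwu, hF⟩
      rw [TDSModel.sat_F] at hF
      obtain ⟨v, huv, hφv⟩ := hF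
      have huw : M.RG u w := (M.frame.h_conv w u).mp hwu
      rcases M.frame.t4 u w v huw huv with h | h | h
      · right; right; rw [TDSModel.sat_F]; exact ⟨v, h, hφv⟩
      · right; left; rw [← h] at hφv; exact hφv
      · left; rw [TDSModel.sat_P]; exact ⟨v, (M.frame.h_conv w v).mpr h, hφv⟩
  | a25 φ =>
      intro M w
      rw [TDSModel.sat_impl, TDSModel.sat_F, TDSModel.sat_diamCoal]
      rintro ⟨u, hwu, hd⟩
      rw [TDSModel.sat_diam] at hd
      obtain ⟨v, huv, hφv⟩ := hd
      obtain ⟨z, hwz, hzv⟩ := M.frame.t6 w u v hwu huv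
      exact ⟨z, hwz, (TDSModel.sat_F _ _ _).mpr ⟨v, hzv, hφv⟩⟩
  | mp h1 h2 ih1 ih2 =>
      intro M w
      exact (TDSModel.sat_impl _ _ _ _).mp (ih1 M w) (ih2 M w)
  | necBox h ih =>
      intro M w u hu
      exact ih M u
  | necG h ih =>
      intro M w u hu
      exact ih M u
  | necH h ih =>
      intro M w u hu
      exact ih M u
  | r2 p hocc hprv ih =>
      intro M w
      classical
      set v' : M.W → Prop := fun x => ∃ u, M.Rbox w u ∧ (M.RG u x ∨ M.RG x u) with hv'def
      let M' : TDSModel Ag :=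
        { toKModel := { M.toKModel with val := fun q => if q = p then v' else M.val q },
          frame := M.frame }
      have hval : ∀ x : M.W, (M'.sat (Formula.var p) x ↔ v' x) := by
        intro x
        show (if p = p then v' else M.val p) x ↔ v' x
        rw [if_pos rfl]
      have hname : M'.sat (Formula.nameF p) w := by
        refine ⟨?_, ?_⟩
        · intro u hu hvar
          obtain ⟨u', hu', hor⟩ := (hval u).mp hvar
          rcases hor with h1 | h1
          · exact M.frame.t7 u' u
              (M.frame.box_equiv.trans (M.frame.box_equiv.symm hu') hu) h1
          · exact M.frame.t7 u u'
              (M.frame.box_equiv.trans (M.frame.box_equiv.symm hu) hu') h1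
        · intro u hu
          exact ⟨fun z hz => (hval z).mpr ⟨u, hu, Or.inl hz⟩,
                 fun z hz => (hval z).mpr ⟨u, hu, Or.inr ((M.frame.h_conv u z).mp hz)⟩⟩
      have hφ := (TDSModel.sat_impl _ _ _ _).mp (ih M' w) hname
      exact (KModel.sat_update M.toKModel p v' _ hocc w).mp hφ
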